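/- Let X be a nonnegative random variable and a, b ≥ 0. Then min{a·E[X²], b·(E[X²])^{3/2}} ≤ E[min{(3/2)·a·X², b·X³}]. -/

import Mathlib

open MeasureTheory Real

/-- Tangent-line inequality for `u ↦ b·u^{3/2}` written with `x = √u`, `t = √s`. -/
lemma cubic_tangent (b t x : ℝ) (hb : 0 ≤ b) (ht : 0 ≤ t) (hx : 0 ≤ x) :
    (3 / 2) * b * t * x ^ 2 - (1 / 2) * b * t ^ 3 ≤ b * x ^ 3 := by
  nlinarith [mul_nonneg hb (mul_nonneg (sq_nonneg (x - t)) (by linarith : (0:ℝ) ≤ 2 * x + t))]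

lemma rpow_three_halves {m : ℝ} (hm : 0 ≤ m) : m ^ ((3 : ℝ) / 2) = Real.sqrt m ^ 3 := by
  rw [show ((3:ℝ)/2) = (1/2) * (3 : ℕ) by norm_num, Real.rpow_mul hm, Real.rpow_natCast,
    ← Real.sqrt_eq_rpow]

/-- For a nonnegative random variable `X` with `E[X²] < ∞` and constants `a, b ≥ 0`,
`min{a·E[X²], b·(E[X²])^{3/2}} ≤ E[min{(3/2)·a·X², b·X³}]`. -/
theorem stmt1 {Ω : Type*} [MeasurableSpace Ω] (ℙ : Measure Ω) [IsProbabilityMeasure ℙ]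
    (X : Ω → ℝ) (hX : Measurable X) (hXnn : ∀ ω, 0 ≤ X ω)
    (hX2 : Integrable (fun ω => X ω ^ 2) ℙ)
    (a b : ℝ) (ha : 0 ≤ a) (hb : 0 ≤ b) :
    min (a * ∫ ω, X ω ^ 2 ∂ℙ) (b * (∫ ω, X ω ^ 2 ∂ℙ) ^ ((3 : ℝ) / 2)) ≤
      ∫ ω, min ((3 / 2) * a * X ω ^ 2) (b * X ω ^ 3) ∂ℙ := by
  set m := ∫ ω, X ω ^ 2 ∂ℙ with hm_def
  have hm : 0 ≤ m := integral_nonneg fun ω => sq_nonneg _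
  -- it suffices to exhibit a linear lower bound for the integrand that is large at m
  have key : ∀ α β : ℝ,
      (∀ x : ℝ, 0 ≤ x → α * x ^ 2 + β ≤ min ((3 / 2) * a * x ^ 2) (b * x ^ 3)) →
      min (a * m) (b * m ^ ((3 : ℝ) / 2)) ≤ α * m + β →
      min (a * m) (b * m ^ ((3 : ℝ) / 2)) ≤
        ∫ ω, min ((3 / 2) * a * X ω ^ 2) (b * X ω ^ 3) ∂ℙ := by
    intro α β hpt hAt
    have hintL : Integrable (fun ω => α * X ω ^ 2 + β) ℙ :=
      (hX2.const_mul α).add (integrable_const β)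
    have hintMin : Integrable (fun ω => min ((3 / 2) * a * X ω ^ 2) (b * X ω ^ 3)) ℙ := by
      have hbd : Integrable (fun ω => ((3/2)*a + |α|) * X ω ^ 2 + |β|) ℙ :=
        (hX2.const_mul _).add (integrable_const _)
      refine Integrable.mono' hbd
        ((((hX.pow_const 2).const_mul _).min ((hX.pow_const 3).const_mul _)).aestronglyMeasurable)
        ?_
      filter_upwards with ω
      have h1 := hpt (X ω) (hXnn ω)
      have hx2 : 0 ≤ X ω ^ 2 := sq_nonneg _
      rw [Real.norm_eq_abs, abs_le]
      constructor
      · have h3 : -( |α| * X ω ^ 2 + |β| ) ≤ α * X ω ^ 2 + β := by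
          nlinarith [neg_abs_le α, neg_abs_le β, abs_nonneg α]
        have h2 : (0:ℝ) ≤ (3/2)*a * X ω ^ 2 := by positivity
        nlinarith [h1]
      · have h2 : min ((3 / 2) * a * X ω ^ 2) (b * X ω ^ 3) ≤ (3/2)*a * X ω ^ 2 :=
          min_le_left _ _
        nlinarith [abs_nonneg α, abs_nonneg β, mul_nonneg (abs_nonneg α) (sq_nonneg (X ω))]
    calc min (a * m) (b * m ^ ((3 : ℝ) / 2)) ≤ α * m + β := hAt
      _ = ∫ ω, (α * X ω ^ 2 + β) ∂ℙ := by
          rw [integral_add (hX2.const_mul α) (integrable_const β), integral_const_mul,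
            integral_const, probReal_univ, smul_eq_mul, one_mul]
      _ ≤ _ := integral_mono hintL hintMin fun ω => hpt (X ω) (hXnn ω)
  rcases eq_or_lt_of_le hb with hb0 | hbpos
  · -- b = 0
    apply key 0 0
    · intro x hx
      have : min ((3 / 2) * a * x ^ 2) (b * x ^ 3) = 0 := by
        rw [← hb0]; simp
        positivity
      rw [this]; norm_num
    · rw [← hb0]
      have : min (a * m) ((0:ℝ) * m ^ ((3:ℝ)/2)) = 0 := by
        rw [zero_mul, min_eq_right (by positivity)]
      rw [this]; norm_num
  · set r := Real.sqrt m with hr_def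
    have hr : 0 ≤ r := Real.sqrt_nonneg m
    have hr2 : r ^ 2 = m := Real.sq_sqrt hm
    have hm32 : m ^ ((3 : ℝ) / 2) = r ^ 3 := rpow_three_halves hm
    rcases le_total (b * r) a with hcase | hcase
    · -- m ≤ (a/b)² : tangent at m
      apply key ((3/2) * b * r) (-(1/2) * b * r ^ 3)
      · intro x hx
        refine le_min ?_ ?_
        · nlinarith [mul_nonneg hb (pow_nonneg hr 3), mul_nonneg (sq_nonneg x) (sub_nonneg.mpr hcase)]
        · have := cubic_tangent b r x hb hr hx
          linarith
      · have : (3/2) * b * r * m + -(1/2) * b * r ^ 3 = b * r ^ 3 := by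
          rw [← hr2]; ring
        rw [this, hm32]
        exact min_le_right _ _
    · -- (a/b)² ≤ m : tangent at (a/b)²
      set q := a / b with hq_def
      have hq : 0 ≤ q := div_nonneg ha hb
      have haq : a = b * q := by rw [hq_def]; field_simp [hbpos.ne']
      have hqr : q ≤ r := by
        rw [hq_def, div_le_iff₀ hbpos] at *
        linarith [hcase]
      apply key ((3/2) * b * q) (-(1/2) * b * q ^ 3)
      · intro x hx
        refine le_min ?_ ?_
        · rw [haq]
          nlinarith [mul_nonneg hb (pow_nonneg hq 3)]
        · have := cubic_tangent b q x hb hq hx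
          linarith
      · refine le_trans (min_le_left _ _) ?_
        have h1 : a * m ≤ (3/2) * b * q * m + -(1/2) * b * q ^ 3 := by
          rw [haq, ← hr2]
          nlinarith [mul_nonneg (mul_nonneg hb hq) (mul_nonneg (add_nonneg hr hq) (sub_nonneg.mpr hqr))]
        exact h1
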